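/- For every n ≥ 0, the number of lattice paths of length n that never go below the x-axis (Dyck path prefixes) equals the number of lattice paths of length n that end at height δ_n, where δ_n is the remainder of n modulo 2 (Grand Dyck paths). -/

import Mathlib

/-- A lattice path of length `n`: each step is `+1` (U) or `-1` (D). -/
def IsPath {n : ℕ} (P : Fin n → ℤ) : Prop := ∀ l, P l = 1 ∨ P l = -1

/-- Height of the path `P` at `x = a`: sum of the first `a` steps. -/
def ht {n : ℕ} (P : Fin n → ℤ) (a : ℕ) : ℤ :=
  ∑ l ∈ Finset.univ.filter (fun l : Fin n => (l : ℕ) < a), P l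

def toPath {n : ℕ} (b : Fin n → Bool) : Fin n → ℤ := fun l => if b l then 1 else -1

def fcount {n : ℕ} (b : Fin n → Bool) : ℕ :=
  (Finset.univ.filter (fun l => b l = false)).card

def Nonneg {n : ℕ} (b : Fin n → Bool) : Prop := ∀ a ≤ n, 0 ≤ ht (toPath b) a

instance {n : ℕ} : DecidablePred (Nonneg (n := n)) := fun _ => Nat.decidableBallLE _ _

def pcount (n j : ℕ) : ℕ :=
  ((Finset.univ : Finset (Fin n → Bool)).filter (fun b => Nonneg b ∧ fcount b = j)).card

lemma ht_eq_sum {n : ℕ} (P : Fin n → ℤ) (a : ℕ) :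
    ht P a = ∑ l : Fin n, if (l : ℕ) < a then P l else 0 := by
  rw [ht, Finset.sum_filter]

lemma isPath_toPath {n : ℕ} (b : Fin n → Bool) : IsPath (toPath b) := by
  intro l; unfold toPath; by_cases h : b l <;> simp [h]

lemma ht_snoc_le {n : ℕ} (b : Fin n → Bool) (x : Bool) {a : ℕ} (ha : a ≤ n) :
    ht (toPath (Fin.snoc b x)) a = ht (toPath b) a := by
  rw [ht_eq_sum, ht_eq_sum, Fin.sum_univ_castSucc]
  simp only [toPath, Fin.snoc_castSucc, Fin.snoc_last, Fin.coe_castSucc, Fin.val_last]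
  rw [if_neg (by omega), add_zero]

lemma ht_snoc_last {n : ℕ} (b : Fin n → Bool) (x : Bool) :
    ht (toPath (Fin.snoc b x)) (n+1) = ht (toPath b) n + (if x then 1 else -1) := by
  rw [ht_eq_sum, ht_eq_sum, Fin.sum_univ_castSucc]
  simp only [toPath, Fin.snoc_castSucc, Fin.snoc_last, Fin.coe_castSucc, Fin.val_last]
  congr 1
  · apply Finset.sum_congr rfl
    intro l _
    rw [if_pos (by omega), if_pos l.isLt]
  · rw [if_pos (by omega)]

lemma fcount_eq_sum {n : ℕ} (b : Fin n → Bool) :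
    fcount b = ∑ l : Fin n, if b l = false then 1 else 0 := by
  rw [fcount, Finset.card_filter]

lemma fcount_snoc {n : ℕ} (b : Fin n → Bool) (x : Bool) :
    fcount (Fin.snoc b x) = fcount b + (if x = false then 1 else 0) := by
  rw [fcount_eq_sum, fcount_eq_sum, Fin.sum_univ_castSucc]
  simp only [Fin.snoc_castSucc, Fin.snoc_last]

lemma fcount_snoc_true {n : ℕ} (b : Fin n → Bool) :
    fcount (Fin.snoc b true) = fcount b := by rw [fcount_snoc]; rfl

lemma fcount_snoc_false {n : ℕ} (b : Fin n → Bool) :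
    fcount (Fin.snoc b false) = fcount b + 1 := by rw [fcount_snoc]; rfl

lemma ht_full {n : ℕ} (b : Fin n → Bool) :
    ht (toPath b) n = (n : ℤ) - 2 * (fcount b : ℤ) := by
  rw [ht_eq_sum]
  have h1 : ∀ l : Fin n, (if (l : ℕ) < n then toPath b l else 0)
      = 1 - 2 * (if b l = false then (1:ℤ) else 0) := by
    intro l
    rw [if_pos l.isLt]
    unfold toPath
    by_cases h : b l <;> simp [h]
  rw [Finset.sum_congr rfl (fun l _ => h1 l)]
  rw [Finset.sum_sub_distrib, ← Finset.mul_sum]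
  have h2 : ((fcount b : ℤ)) = ∑ l : Fin n, (if b l = false then (1:ℤ) else 0) := by
    rw [fcount_eq_sum]
    push_cast [Finset.sum_ite]
    simp
  rw [← h2]
  simp [mul_comm]

lemma nonneg_snoc_iff {n : ℕ} (b : Fin n → Bool) (x : Bool) :
    Nonneg (Fin.snoc b x) ↔ Nonneg b ∧ 0 ≤ ht (toPath b) n + (if x then 1 else -1) := by
  constructor
  · intro h
    refine ⟨fun a ha => ?_, ?_⟩
    · rw [← ht_snoc_le b x ha]; exact h a (by omega)
    · rw [← ht_snoc_last b x]; exact h (n+1) le_rfl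
  · rintro ⟨h1, h2⟩ a ha
    rcases Nat.lt_or_ge a (n+1) with h | h
    · rw [ht_snoc_le b x (by omega)]; exact h1 a (by omega)
    · have : a = n+1 := by omega
      rw [this, ht_snoc_last b x]; exact h2

lemma nonneg_snoc_true_iff {n : ℕ} (b : Fin n → Bool) :
    Nonneg (Fin.snoc b true) ↔ Nonneg b ∧ 0 ≤ ht (toPath b) n + 1 := by
  have h : (if (true : Bool) then (1:ℤ) else -1) = 1 := rfl
  rw [nonneg_snoc_iff, h]

lemma nonneg_snoc_false_iff {n : ℕ} (b : Fin n → Bool) :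
    Nonneg (Fin.snoc b false) ↔ Nonneg b ∧ 0 ≤ ht (toPath b) n - 1 := by
  have h : (if (false : Bool) then (1:ℤ) else -1) = -1 := rfl
  rw [nonneg_snoc_iff, h]
  constructor <;> (rintro ⟨h1, h2⟩; exact ⟨h1, by omega⟩)


lemma fcount_eq_zero {n : ℕ} {b : Fin n → Bool} (h : fcount b = 0) (l : Fin n) :
    b l = true := by
  rw [fcount, Finset.card_eq_zero, Finset.filter_eq_empty_iff] at h
  have := h (Finset.mem_univ l)
  simpa using this

lemma pcount_zero_zero : pcount 0 0 = 1 := by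
  rw [pcount, Finset.filter_true_of_mem, Finset.card_univ]
  · simp
  · intro b _
    refine ⟨fun a _ => ?_, ?_⟩
    · rw [ht_eq_sum]; simp
    · rw [fcount]; simp

lemma pcount_zero_succ (j : ℕ) : pcount 0 (j+1) = 0 := by
  rw [pcount, Finset.card_eq_zero, Finset.filter_eq_empty_iff]
  rintro b - ⟨-, hf⟩
  have : fcount b ≤ 0 := by
    rw [fcount]
    exact le_trans (Finset.card_filter_le _ _) (by simp)
  omega

lemma pcount_succ_zero (n : ℕ) : pcount (n+1) 0 = pcount n 0 := by
  rw [pcount, pcount]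
  apply Finset.card_nbij' (i := Fin.init) (j := fun c => Fin.snoc c true)
  · rintro b hb
    rw [Finset.mem_coe, Finset.mem_filter] at hb ⊢
    obtain ⟨-, hn, hf⟩ := hb
    have hlast : b (Fin.last n) = true := fcount_eq_zero hf _
    have hb' : Fin.snoc (Fin.init b) true = b := by rw [← hlast, Fin.snoc_init_self]
    rw [← hb'] at hn hf
    rw [nonneg_snoc_true_iff] at hn
    rw [fcount_snoc_true] at hf
    exact ⟨Finset.mem_univ _, hn.1, hf⟩
  · rintro c hc
    rw [Finset.mem_coe, Finset.mem_filter] at hc ⊢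
    obtain ⟨-, hn, hf⟩ := hc
    refine ⟨Finset.mem_univ _, ?_, ?_⟩
    · rw [nonneg_snoc_true_iff]
      refine ⟨hn, ?_⟩
      rw [ht_full, hf]
      have : (0:ℤ) ≤ (n:ℤ) := Int.natCast_nonneg n
      omega
    · rw [fcount_snoc_true, hf]
  · rintro b hb
    rw [Finset.mem_coe, Finset.mem_filter] at hb
    obtain ⟨-, -, hf⟩ := hb
    rw [← fcount_eq_zero hf (Fin.last n)]; exact Fin.snoc_init_self b
  · rintro c _
    exact Fin.init_snoc _ _

lemma pcount_succ_succ (n j : ℕ) :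
    pcount (n+1) (j+1) = pcount n (j+1) + (if 2*(j+1) ≤ n+1 then pcount n j else 0) := by
  classical
  rw [pcount]
  rw [← Finset.card_filter_add_card_filter_not (fun b => b (Fin.last n) = true)]
  congr 1
  · -- last step is U
    rw [pcount]
    apply Finset.card_nbij' (i := Fin.init) (j := fun c => Fin.snoc c true)
    · rintro b hb
      simp only [Finset.mem_coe, Finset.mem_filter] at hb ⊢
      obtain ⟨⟨-, hn, hf⟩, hlast⟩ := hb
      have hb' : Fin.snoc (Fin.init b) true = b := by rw [← hlast, Fin.snoc_init_self]
      rw [← hb'] at hn hf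
      rw [nonneg_snoc_true_iff] at hn
      rw [fcount_snoc_true] at hf
      exact ⟨Finset.mem_univ _, hn.1, hf⟩
    · rintro c hc
      simp only [Finset.mem_coe, Finset.mem_filter] at hc ⊢
      obtain ⟨-, hn, hf⟩ := hc
      refine ⟨⟨Finset.mem_univ _, ?_, ?_⟩, ?_⟩
      · rw [nonneg_snoc_true_iff]
        refine ⟨hn, ?_⟩
        have h0 := hn n le_rfl
        omega
      · rw [fcount_snoc_true, hf]
      · rw [Fin.snoc_last]
    · rintro b hb
      simp only [Finset.mem_coe, Finset.mem_filter] at hb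
      rw [← hb.2]; exact Fin.snoc_init_self b
    · rintro c _
      exact Fin.init_snoc _ _
  · -- last step is D
    by_cases hc : 2*(j+1) ≤ n+1
    · rw [if_pos hc, pcount]
      apply Finset.card_nbij' (i := Fin.init) (j := fun c => Fin.snoc c false)
      · rintro b hb
        simp only [Finset.mem_coe, Finset.mem_filter] at hb ⊢
        obtain ⟨⟨-, hn, hf⟩, hlast⟩ := hb
        have hlast' : b (Fin.last n) = false := by
          cases h : b (Fin.last n)
          · rfl
          · exact absurd h hlast
        have hb' : Fin.snoc (Fin.init b) false = b := by rw [← hlast', Fin.snoc_init_self]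
        rw [← hb'] at hn hf
        rw [nonneg_snoc_false_iff] at hn
        rw [fcount_snoc_false] at hf
        exact ⟨Finset.mem_univ _, hn.1, by omega⟩
      · rintro c hc'
        simp only [Finset.mem_coe, Finset.mem_filter] at hc' ⊢
        obtain ⟨-, hn, hf⟩ := hc'
        refine ⟨⟨Finset.mem_univ _, ?_, ?_⟩, ?_⟩
        · rw [nonneg_snoc_false_iff]
          refine ⟨hn, ?_⟩
          rw [ht_full, hf]
          push_cast
          omega
        · rw [fcount_snoc_false, hf]
        · rw [Fin.snoc_last]
          exact Bool.false_ne_true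
      · rintro b hb
        simp only [Finset.mem_coe, Finset.mem_filter] at hb
        have hlast' : b (Fin.last n) = false := by
          cases h : b (Fin.last n)
          · rfl
          · exact absurd h hb.2
        rw [← hlast']; exact Fin.snoc_init_self b
      · rintro c _
        exact Fin.init_snoc _ _
    · rw [if_neg hc, Finset.card_eq_zero, Finset.filter_eq_empty_iff]
      rintro b hb
      rw [Finset.mem_filter] at hb
      obtain ⟨-, hn, hf⟩ := hb
      have h0 := hn (n+1) le_rfl
      rw [ht_full, hf] at h0
      push_cast at h0
      omega

lemma choose_mono_step {n r : ℕ} (h : 2*r+1 ≤ n) : n.choose r ≤ n.choose (r+1) := by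
  rcases eq_or_lt_of_le h with he | hl
  · have hr : r ≤ n := by omega
    have h2 : n - r = r + 1 := by omega
    rw [← Nat.choose_symm hr, h2]
  · exact Nat.choose_le_succ_of_lt_half_left (by omega)

lemma choose_anti_step {n r : ℕ} (h : n ≤ 2*r+1) : n.choose (r+1) ≤ n.choose r := by
  rcases le_or_gt (r+1) n with hr | hr
  · have h1 : n.choose (r+1) = n.choose (n - (r+1)) := (Nat.choose_symm hr).symm
    have h2 : n.choose r = n.choose (n - r) := (Nat.choose_symm (by omega)).symm
    have h3 : n - r = (n - (r+1)) + 1 := by omega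
    rw [h1, h2, h3]
    exact choose_mono_step (by omega)
  · rw [Nat.choose_eq_zero_of_lt hr]; exact Nat.zero_le _

lemma choose_anti_chain {n a : ℕ} (ha : n ≤ 2*a+1) : ∀ b, a ≤ b → n.choose b ≤ n.choose a := by
  intro b
  induction b with
  | zero => intro h; simp [Nat.le_zero.mp h]
  | succ b ih =>
    intro h
    rcases Nat.lt_or_ge a (b+1) with h1 | h1
    · have hb : a ≤ b := by omega
      exact le_trans (choose_anti_step (by omega)) (ih hb)
    · have : a = b+1 := by omega
      simp [this]

def bal : ℕ → ℕ → ℕ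
  | 0, 0 => 1
  | 0, _+1 => 0
  | n+1, 0 => 1
  | n+1, j+1 => bal n (j+1) + (if 2*(j+1) ≤ n+1 then bal n j else 0)

lemma bal_zero (n : ℕ) : bal n 0 = 1 := by cases n <;> rfl

lemma bal_closed : ∀ n j : ℕ, bal n (j+1) = n.choose (j+1) - n.choose j := by
  intro n
  induction n with
  | zero => intro j; simp [bal, Nat.choose_eq_zero_of_lt]
  | succ n ih =>
    intro j
    have pas1 : (n+1).choose (j+1) = n.choose j + n.choose (j+1) := Nat.choose_succ_succ n j
    show bal n (j+1) + (if 2*(j+1) ≤ n+1 then bal n j else 0) = _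
    by_cases hc : 2*(j+1) ≤ n+1
    · rw [if_pos hc, ih j]
      cases j with
      | zero =>
        rw [bal_zero]
        simp only [show (0:ℕ)+1 = 1 from rfl] at pas1 ⊢
        simp only [pas1, Nat.choose_zero_right, Nat.choose_one_right]
        omega
      | succ i =>
        rw [ih i]
        have pas2 : (n+1).choose (i+1) = n.choose i + n.choose (i+1) := Nat.choose_succ_succ n i
        have m1 : n.choose (i+1) ≤ n.choose (i+2) := choose_mono_step (by omega)
        have m2 : n.choose i ≤ n.choose (i+1) := choose_mono_step (by omega)
        simp only [show i+1+1 = i+2 from rfl] at pas1 ⊢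
        omega
    · rw [if_neg hc, ih j]
      have ha : (n+1).choose (j+1) ≤ (n+1).choose j := choose_anti_step (by omega)
      have hb : n.choose (j+1) ≤ n.choose j := choose_anti_step (by omega)
      omega

lemma bal_sum (n : ℕ) : ∀ m, (∑ j ∈ Finset.range (m+1), bal n j) = n.choose (min m (n/2)) := by
  intro m
  induction m with
  | zero => simpa [bal_zero] using (Nat.choose_zero_right n).symm
  | succ m ih =>
    rw [Finset.sum_range_succ, ih, bal_closed]
    rcases le_or_gt (m+1) (n/2) with h | h
    · have hm : min m (n/2) = m := by omega
      have hm1 : min (m+1) (n/2) = m+1 := by omega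
      have := choose_mono_step (n := n) (r := m) (by omega)
      rw [hm, hm1]; omega
    · have hm : min m (n/2) = min (m+1) (n/2) := by omega
      have h1 : n.choose (m+1) ≤ n.choose m := choose_anti_step (by omega)
      have hmono : n.choose (m+1) ≤ n.choose (min m (n/2)) := by
        rcases le_or_gt m (n/2) with h2 | h2
        · rw [min_eq_left h2]; exact h1
        · rw [min_eq_right (le_of_lt h2)]
          exact choose_anti_chain (by omega) (m+1) (by omega)
      rw [← hm]; omega

lemma bal_total (n : ℕ) : (∑ j ∈ Finset.range (n+1), bal n j) = n.choose (n/2) := by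
  rw [bal_sum n n, min_eq_right (by omega)]

lemma pcount_eq_bal : ∀ n j, pcount n j = bal n j := by
  intro n
  induction n with
  | zero =>
    intro j
    cases j with
    | zero => rw [pcount_zero_zero]; rfl
    | succ j => rw [pcount_zero_succ]; rfl
  | succ n ih =>
    intro j
    cases j with
    | zero => rw [pcount_succ_zero, ih, bal_zero, bal_zero]
    | succ j =>
      rw [pcount_succ_succ, ih, ih]
      show _ = bal n (j+1) + (if 2*(j+1) ≤ n+1 then bal n j else 0)
      split_ifs <;> rfl

lemma lhs_count (n : ℕ) :
    ((Finset.univ : Finset (Fin n → Bool)).filter Nonneg).card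
      = ∑ j ∈ Finset.range (n+1), pcount n j := by
  rw [Finset.card_eq_sum_card_fiberwise (f := fcount) (t := Finset.range (n+1))]
  · apply Finset.sum_congr rfl
    intro j _
    rw [pcount, Finset.filter_filter]
  · intro b _
    rw [Finset.mem_coe, Finset.mem_range]
    have : fcount b ≤ n := by
      rw [fcount]
      exact le_trans (Finset.card_filter_le _ _) (by simp)
    omega

lemma rhs_count (n : ℕ) :
    ((Finset.univ : Finset (Fin n → Bool)).filter (fun b => fcount b = n/2)).card
      = n.choose (n/2) := by
  have key : ((Finset.univ : Finset (Fin n → Bool)).filter (fun b => fcount b = n/2)).card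
      = (Finset.powersetCard (n/2) (Finset.univ : Finset (Fin n))).card := by
    apply Finset.card_nbij' (i := fun b => Finset.univ.filter (fun l => b l = false))
      (j := fun s => fun l => decide (l ∉ s))
    · intro b hb
      rw [Finset.mem_coe, Finset.mem_filter] at hb
      rw [Finset.mem_coe, Finset.mem_powersetCard]
      exact ⟨Finset.subset_univ _, hb.2⟩
    · intro s hs
      rw [Finset.mem_coe, Finset.mem_powersetCard] at hs
      rw [Finset.mem_coe, Finset.mem_filter]
      refine ⟨Finset.mem_univ _, ?_⟩
      rw [fcount, ← hs.2]
      congr 1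
      ext l
      simp
    · intro b _
      funext l
      cases h : b l <;> simp [Finset.mem_filter, h]
    · intro s _
      ext l
      simp
  rw [key, Finset.card_powersetCard, Finset.card_univ, Fintype.card_fin]

lemma toPath_decide {n : ℕ} {P : Fin n → ℤ} (h : IsPath P) :
    toPath (fun l => decide (P l = 1)) = P := by
  funext l
  rcases h l with h1 | h1 <;> simp [toPath, h1]

lemma card_path_subtype (n : ℕ) (Q : (Fin n → ℤ) → Prop)
    [DecidablePred fun b : Fin n → Bool => Q (toPath b)] :
    Nat.card {P : Fin n → ℤ // IsPath P ∧ Q P}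
      = ((Finset.univ : Finset (Fin n → Bool)).filter (fun b => Q (toPath b))).card := by
  have e : {P : Fin n → ℤ // IsPath P ∧ Q P} ≃ {b : Fin n → Bool // Q (toPath b)} := {
    toFun := fun x => ⟨fun l => decide (x.1 l = 1), by
      rw [toPath_decide x.2.1]; exact x.2.2⟩
    invFun := fun y => ⟨toPath y.1, isPath_toPath _, y.2⟩
    left_inv := fun x => Subtype.ext (toPath_decide x.2.1)
    right_inv := fun y => by
      apply Subtype.ext
      funext l
      show decide (toPath y.1 l = 1) = y.1 l
      cases h : y.1 l <;> simp [toPath, h]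
  }
  rw [Nat.card_congr e]
  rw [Nat.card_eq_fintype_card]
  exact Fintype.card_of_subtype _ (fun x => by simp)

theorem stmt16 (n : ℕ) :
    Nat.card {P : Fin n → ℤ // IsPath P ∧ ∀ a ≤ n, 0 ≤ ht P a} =
    Nat.card {P : Fin n → ℤ // IsPath P ∧ ht P n = (n : ℤ) % 2} := by
  classical
  rw [card_path_subtype n (fun P => ∀ a ≤ n, 0 ≤ ht P a),
      card_path_subtype n (fun P => ht P n = (n : ℤ) % 2)]
  have h1 : ((Finset.univ : Finset (Fin n → Bool)).filter
      (fun b => ∀ a ≤ n, 0 ≤ ht (toPath b) a)).card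
      = ((Finset.univ : Finset (Fin n → Bool)).filter Nonneg).card := by
    congr 1
  have h2 : ((Finset.univ : Finset (Fin n → Bool)).filter
      (fun b => ht (toPath b) n = (n : ℤ) % 2)).card
      = ((Finset.univ : Finset (Fin n → Bool)).filter (fun b => fcount b = n/2)).card := by
    congr 1
    apply Finset.filter_congr
    intro b _
    rw [ht_full]
    constructor
    · intro h
      have hle : fcount b ≤ n := by
        rw [fcount]; exact le_trans (Finset.card_filter_le _ _) (by simp)
      omega
    · intro h
      rw [h]
      omega
  rw [h1, h2, lhs_count, rhs_count]
  have : ∑ j ∈ Finset.range (n+1), pcount n j = ∑ j ∈ Finset.range (n+1), bal n j :=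
    Finset.sum_congr rfl (fun j _ => pcount_eq_bal n j)
  rw [this, bal_total]
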